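/- Let f₁, …, f_k be polynomials in n variables over F_q with k > n. Then there exist g₁, …, g_n, each an F_q-linear combination of f₁, …, f_k (in particular, of total degree at most max_i deg f_i), whose common zero set in F_q^n equals the common zero set of f₁, …, f_k. -/

import Mathlib

/-- A matrix is in reduced row echelon form: every row is either zero, or has a
leading entry `1` such that all entries to its left in that row are zero, all other
entries in its column are zero, and every later row vanishes at that column and to
its left (so pivots strictly increase and zero rows are at the bottom). -/
def IsRREF {K : Type*} [Field K] {m n : ℕ} (M : Matrix (Fin m) (Fin n) K) : Prop :=
  ∀ i : Fin m, (∀ j, M i j = 0) ∨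
    ∃ j : Fin n, M i j = 1 ∧ (∀ j', j' < j → M i j' = 0) ∧
      (∀ i', i' ≠ i → M i' j = 0) ∧
      (∀ i', i < i' → ∀ j', j' ≤ j → M i' j' = 0)

open MvPolynomial Finset

/-- The number of solutions `c` of `∑ c j * a j = 0` is `q^k / q` when some `a j ≠ 0`. -/
lemma aux_card_ker {F : Type*} [Field F] [Fintype F] [DecidableEq F] {k : ℕ} (a : Fin k → F)
    (ha : ∃ j, a j ≠ 0) :
    (Finset.univ.filter (fun c : Fin k → F => ∑ j, c j * a j = 0)).card * Fintype.card F
      = Fintype.card F ^ k := by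
  classical
  obtain ⟨j0, hj0⟩ := ha
  let φ : (Fin k → F) →ₗ[F] F :=
    { toFun := fun c => ∑ j, c j * a j
      map_add' := by intro u v; simp [add_mul, Finset.sum_add_distrib]
      map_smul' := by intro r u; simp [Finset.mul_sum, mul_assoc] }
  have hφ : ∀ c, φ c = ∑ j, c j * a j := fun c => rfl
  have hsurj : Function.Surjective φ := by
    intro t
    refine ⟨Pi.single j0 (t * (a j0)⁻¹), ?_⟩
    rw [hφ, Finset.sum_eq_single j0]
    · rw [Pi.single_eq_same]; field_simp
    · intro b _ hb; rw [Pi.single_eq_of_ne hb, zero_mul]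
    · intro h; exact absurd (Finset.mem_univ j0) h
  have hkerrank : Module.finrank F (LinearMap.ker φ) = k - 1 := by
    have h1 := φ.finrank_range_add_finrank_ker
    have h2 : LinearMap.range φ = ⊤ := LinearMap.range_eq_top.2 hsurj
    rw [h2] at h1
    simp only [finrank_top, Module.finrank_self, Module.finrank_pi, Fintype.card_fin] at h1
    omega
  have hk : 1 ≤ k := by
    rcases Nat.eq_zero_or_pos k with h | h
    · subst h; exact absurd j0.2 (by simp)
    · exact h
  have hcard : Fintype.card (LinearMap.ker φ) = Fintype.card F ^ (k - 1) := by
    rw [Module.card_eq_pow_finrank (K := F) (V := ↥(LinearMap.ker φ)), hkerrank]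
  have hfilter : (Finset.univ.filter (fun c : Fin k → F => ∑ j, c j * a j = 0)).card
      = Fintype.card (LinearMap.ker φ) := by
    calc (Finset.univ.filter (fun c : Fin k → F => ∑ j, c j * a j = 0)).card
        = Fintype.card {c : Fin k → F // ∑ j, c j * a j = 0} := (Fintype.card_subtype _).symm
      _ = Fintype.card (LinearMap.ker φ) := Fintype.card_congr
          (Equiv.subtypeEquivRight fun c => by rw [LinearMap.mem_ker, hφ])
  rw [hfilter, hcard, ← pow_succ, Nat.sub_add_cancel hk]

/-- One step: some linear combination vanishes on less than `|S|/q` points of `S`. -/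
lemma aux_step {F : Type*} [Field F] [Fintype F] [DecidableEq F] {n k : ℕ}
    (f : Fin k → MvPolynomial (Fin n) F) (S : Finset (Fin n → F)) (hS : S.Nonempty)
    (hx : ∀ x ∈ S, ∃ j, eval x (f j) ≠ 0) :
    ∃ c : Fin k → F,
      (S.filter (fun x => eval x (∑ j, c j • f j) = 0)).card * Fintype.card F < S.card := by
  classical
  by_contra hcon
  push_neg at hcon
  set q := Fintype.card F with hq
  have hq2 : 2 ≤ q := Fintype.one_lt_card
  have heval : ∀ (c : Fin k → F) (x : Fin n → F),
      eval x (∑ j, c j • f j) = ∑ j, c j * eval x (f j) := by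
    intro c x
    rw [map_sum]
    exact Finset.sum_congr rfl fun j _ => smul_eval x (f j) (c j)
  -- total count
  have hswap : ∑ c : Fin k → F, (S.filter (fun x => eval x (∑ j, c j • f j) = 0)).card
      = ∑ x ∈ S, (Finset.univ.filter (fun c : Fin k → F => ∑ j, c j * eval x (f j) = 0)).card := by
    simp only [Finset.card_filter]
    rw [Finset.sum_comm]
    refine Finset.sum_congr rfl fun x _ => Finset.sum_congr rfl fun c _ => by
      rw [heval]
  have htotal : (∑ c : Fin k → F, (S.filter (fun x => eval x (∑ j, c j • f j) = 0)).card) * q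
      = S.card * q ^ k := by
    rw [hswap, Finset.sum_mul]
    rw [Finset.sum_congr rfl fun x hxS => aux_card_ker _ (hx x hxS)]
    simp [mul_comm, hq]
  -- lower bound with strict term at c = 0
  have hstrict : ∑ c : Fin k → F, S.card
      < ∑ c : Fin k → F, (S.filter (fun x => eval x (∑ j, c j • f j) = 0)).card * q := by
    refine Finset.sum_lt_sum (fun c _ => hcon c) ⟨0, Finset.mem_univ 0, ?_⟩
    have h0 : (S.filter (fun x => eval x (∑ j, (0 : Fin k → F) j • f j) = 0)) = S := by
      refine Finset.filter_true_of_mem fun x _ => ?_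
      simp [heval]
    rw [h0]
    have hS1 : 1 ≤ S.card := Finset.card_pos.2 hS
    exact (Nat.lt_mul_iff_one_lt_right hS1).2 hq2
  rw [← Finset.sum_mul, htotal, Finset.sum_const, Finset.card_univ, Fintype.card_pi] at hstrict
  simp only [Fintype.card_fin, Finset.prod_const, Finset.card_univ] at hstrict
  rw [smul_eq_mul, mul_comm] at hstrict
  exact lt_irrefl _ hstrict

/-- Induction: if `|S| < q^i`, then `i` linear combinations suffice to cover `S`. -/
lemma aux_ind {F : Type*} [Field F] [Fintype F] [DecidableEq F] {n k : ℕ}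
    (f : Fin k → MvPolynomial (Fin n) F) :
    ∀ (i : ℕ) (S : Finset (Fin n → F)), S.card < Fintype.card F ^ i →
    (∀ x ∈ S, ∃ j, eval x (f j) ≠ 0) →
    ∃ g : Fin i → MvPolynomial (Fin n) F,
      (∀ t, g t ∈ Submodule.span F (Set.range f)) ∧
      ∀ x ∈ S, ∃ t, eval x (g t) ≠ 0 := by
  intro i
  induction i with
  | zero =>
    intro S hcard _
    have hlt : S.card < 1 := by simpa using hcard
    have : S = ∅ := Finset.card_eq_zero.1 (by omega)
    subst this
    exact ⟨fun t => 0, fun t => Submodule.zero_mem _, by simp⟩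
  | succ i ih =>
    intro S hcard hx
    rcases S.eq_empty_or_nonempty with rfl | hS
    · exact ⟨fun t => 0, fun t => Submodule.zero_mem _, by simp⟩
    obtain ⟨c, hc⟩ := aux_step f S hS hx
    set g0 := ∑ j, c j • f j with hg0
    set S' := S.filter (fun x => eval x g0 = 0) with hS'def
    have hcard' : S'.card < Fintype.card F ^ i := by
      have h1 : S'.card * Fintype.card F < Fintype.card F ^ i * Fintype.card F := by
        calc S'.card * Fintype.card F < S.card := hc
        _ < Fintype.card F ^ (i + 1) := hcard
        _ = Fintype.card F ^ i * Fintype.card F := pow_succ _ _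
      exact Nat.lt_of_mul_lt_mul_right h1
    obtain ⟨g', hg'span, hg'⟩ := ih S' hcard' (fun x hx' => hx x (Finset.mem_filter.1 hx').1)
    refine ⟨Fin.cons g0 g', ?_, ?_⟩
    · intro t
      refine Fin.cases ?_ ?_ t
      · simp only [Fin.cons_zero]
        exact Submodule.sum_mem _ fun j _ =>
          Submodule.smul_mem _ _ (Submodule.subset_span ⟨j, rfl⟩)
      · intro s; simpa using hg'span s
    · intro x hxS
      by_cases h0 : eval x g0 = 0
      · obtain ⟨t, ht⟩ := hg' x (Finset.mem_filter.2 ⟨hxS, h0⟩)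
        exact ⟨t.succ, by simpa using ht⟩
      · exact ⟨0, by simpa using h0⟩

theorem stmt_12 {F : Type*} [Field F] [Fintype F] (n : ℕ) (hn : 0 < n)
    (k : ℕ) (hk : n < k) (f : Fin k → MvPolynomial (Fin n) F) :
    ∃ g : Fin n → MvPolynomial (Fin n) F,
      (∀ i, g i ∈ Submodule.span F (Set.range f)) ∧
        {x : Fin n → F | ∀ i, MvPolynomial.eval x (g i) = 0} =
          {x : Fin n → F | ∀ i, MvPolynomial.eval x (f i) = 0} := by
  classical
  obtain ⟨m, rfl⟩ : ∃ m, n = m + 1 := ⟨n - 1, by omega⟩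
  set S : Finset (Fin (m + 1) → F) :=
    Finset.univ.filter (fun x => ∃ j, eval x (f j) ≠ 0) with hSdef
  have hxS : ∀ x ∈ S, ∃ j, eval x (f j) ≠ 0 := fun x hx => (Finset.mem_filter.1 hx).2
  -- key: each g in the span vanishes wherever all f vanish
  have hspan_zero : ∀ (x : Fin (m + 1) → F), (∀ j, eval x (f j) = 0) →
      ∀ p ∈ Submodule.span F (Set.range f), eval x p = 0 := by
    intro x hxf p hp
    induction hp using Submodule.span_induction with
    | mem p hp => obtain ⟨j, rfl⟩ := hp; exact hxf j
    | zero => simp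
    | add p q _ _ hp hq => rw [map_add, hp, hq, add_zero]
    | smul c p _ hp => rw [smul_eval, hp, mul_zero]
  rcases S.eq_empty_or_nonempty with hSe | hSne
  · -- all f vanish everywhere
    refine ⟨fun _ => 0, fun i => Submodule.zero_mem _, ?_⟩
    ext x
    have : x ∉ S := by rw [hSe]; exact Finset.notMem_empty x
    simp only [hSdef, Finset.mem_filter, Finset.mem_univ, true_and] at this
    push_neg at this
    simp [this]
  · obtain ⟨c, hc⟩ := aux_step f S hSne hxS
    set g0 := ∑ j, c j • f j with hg0
    set S' := S.filter (fun x => eval x g0 = 0) with hS'def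
    have hcard' : S'.card < Fintype.card F ^ m := by
      have hle : S.card ≤ Fintype.card F ^ m * Fintype.card F := by
        calc S.card ≤ Fintype.card (Fin (m + 1) → F) := Finset.card_le_univ S
        _ = Fintype.card F ^ (m + 1) := by simp [Fintype.card_pi]
        _ = Fintype.card F ^ m * Fintype.card F := pow_succ _ _
      exact Nat.lt_of_mul_lt_mul_right (lt_of_lt_of_le hc hle)
    obtain ⟨g', hg'span, hg'⟩ := aux_ind f m S' hcard'
      (fun x hx' => hxS x (Finset.mem_filter.1 hx').1)
    have hg0span : g0 ∈ Submodule.span F (Set.range f) :=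
      Submodule.sum_mem _ fun j _ =>
        Submodule.smul_mem _ _ (Submodule.subset_span ⟨j, rfl⟩)
    refine ⟨Fin.cons g0 g', ?_, ?_⟩
    · intro t
      refine Fin.cases ?_ ?_ t
      · simpa using hg0span
      · intro s; simpa using hg'span s
    · ext x
      simp only [Set.mem_setOf_eq]
      constructor
      · intro hgz
        by_contra hfx
        push_neg at hfx
        have hxmem : x ∈ S := Finset.mem_filter.2 ⟨Finset.mem_univ x, hfx⟩
        have h0 : eval x g0 = 0 := by simpa using hgz 0
        obtain ⟨t, ht⟩ := hg' x (Finset.mem_filter.2 ⟨hxmem, h0⟩)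
        exact ht (by simpa using hgz t.succ)
      · intro hfz t
        refine Fin.cases ?_ ?_ t
        · simpa using hspan_zero x hfz g0 hg0span
        · intro s
          simpa using hspan_zero x hfz (g' s) (hg'span s)
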